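/- For every f ∈ F_op and all x, y > 0, one has g_cl(x,y) ≥ g_f^{s}(x,y); equivalently, m_f(x,y) ≥ f(0)·(x+y). -/

import Mathlib

open ComplexOrder Matrix

/-- `f ∈ F_op`: `f : (0,∞) → (0,∞)` is operator monotone (via the continuous functional
calculus on Hermitian matrices, with the Loewner order expressed through `PosSemidef`),
satisfies `f(x) = x·f(1/x)` for `x > 0`, and `f(1) = 1`. -/
structure IsFop (f : ℝ → ℝ) : Prop where
  pos : ∀ x : ℝ, 0 < x → 0 < f x
  opMono : ∀ (m : ℕ) (X Y : Matrix (Fin m) (Fin m) ℂ), X.PosSemidef → Y.PosSemidef →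
    (Y - X).PosSemidef → (cfc f Y - cfc f X).PosSemidef
  funcEq : ∀ x : ℝ, 0 < x → f x = x * f x⁻¹
  normalized : f 1 = 1

/-- `f(0) = lim_{t→0⁺} f(t)`. -/
def IsFzero (f : ℝ → ℝ) (f0 : ℝ) : Prop :=
  Filter.Tendsto f (nhdsWithin 0 (Set.Ioi 0)) (nhds f0)

/-- `m_f(x,y) = y·f(x/y)`. -/
noncomputable def mfun (f : ℝ → ℝ) (x y : ℝ) : ℝ := y * f (x / y)

/-- `g_cl(x,y) = (x+y)/2`. -/
noncomputable def gcl (x y : ℝ) : ℝ := (x + y) / 2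

/-- `g_f^{as}(x,y) = f(0)·(x−y)²/(2·m_f(x,y))`. -/
noncomputable def gas (f : ℝ → ℝ) (f0 : ℝ) (x y : ℝ) : ℝ :=
  f0 * (x - y) ^ 2 / (2 * mfun f x y)

/-- `g_f^{s}(x,y) = f(0)·(x+y)²/(2·m_f(x,y))`. -/
noncomputable def gs (f : ℝ → ℝ) (f0 : ℝ) (x y : ℝ) : ℝ :=
  f0 * (x + y) ^ 2 / (2 * mfun f x y)


noncomputable def M2 (a b c : ℝ) : Matrix (Fin 2) (Fin 2) ℂ := !![(a:ℂ), (c:ℂ); (c:ℂ), (b:ℂ)]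

lemma M2_herm (a b c : ℝ) : (M2 a b c).IsHermitian := by
  unfold Matrix.IsHermitian M2
  ext i j
  fin_cases i <;> fin_cases j <;> simp [Matrix.conjTranspose_apply]

lemma M2_psd (a b c : ℝ) (ha : 0 ≤ a) (hb : 0 ≤ b) (h : c^2 ≤ a*b) : (M2 a b c).PosSemidef := by
  refine Matrix.PosSemidef.of_dotProduct_mulVec_nonneg (M2_herm a b c) fun x => ?_
  set u := x 0 with hu
  set v := x 1 with hv
  have hexp : dotProduct (star x) ((M2 a b c) *ᵥ x) =
      ((a * Complex.normSq u + b * Complex.normSq v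
        + 2 * c * (starRingEnd ℂ u * v).re : ℝ) : ℂ) := by
    have h1 : starRingEnd ℂ u * u = (Complex.normSq u : ℝ) := by
      rw [mul_comm, Complex.mul_conj]
    have h2 : starRingEnd ℂ v * v = (Complex.normSq v : ℝ) := by
      rw [mul_comm, Complex.mul_conj]
    have h3 : starRingEnd ℂ v * u = starRingEnd ℂ (starRingEnd ℂ u * v) := by
      rw [_root_.map_mul, Complex.conj_conj, mul_comm]
    have h4 : starRingEnd ℂ u * v + starRingEnd ℂ v * u
        = ((2 * (starRingEnd ℂ u * v).re : ℝ) : ℂ) := by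
      rw [h3, Complex.add_conj]
    calc dotProduct (star x) ((M2 a b c) *ᵥ x)
        = Complex.ofReal a * (starRingEnd ℂ u * u) + Complex.ofReal b * (starRingEnd ℂ v * v)
          + Complex.ofReal c * (starRingEnd ℂ u * v + starRingEnd ℂ v * u) := by
          simp [dotProduct, M2, Matrix.mulVec, Fin.sum_univ_two, ← hu, ← hv]
          ring
      _ = _ := by rw [h1, h2, h4]; push_cast; ring
  rw [hexp, Complex.zero_le_real]
  have hN0 : 0 ≤ Complex.normSq u := Complex.normSq_nonneg u
  have hN1 : 0 ≤ Complex.normSq v := Complex.normSq_nonneg v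
  have hre : ((starRingEnd ℂ u * v).re)^2 ≤ Complex.normSq u * Complex.normSq v := by
    have := Complex.normSq_nonneg (starRingEnd ℂ u * v)
    have heq : Complex.normSq (starRingEnd ℂ u * v) = Complex.normSq u * Complex.normSq v := by
      rw [Complex.normSq_mul, Complex.normSq_conj]
    have him : ((starRingEnd ℂ u * v).re)^2 ≤ Complex.normSq (starRingEnd ℂ u * v) := by
      rw [Complex.normSq_apply]
      nlinarith [sq_nonneg ((starRingEnd ℂ u * v).im)]
    linarith [heq ▸ him]
  nlinarith [sq_nonneg (a * Complex.normSq u - b * Complex.normSq v),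
    sq_nonneg (a * Complex.normSq u + b * Complex.normSq v + 2 * c * (starRingEnd ℂ u * v).re),
    mul_nonneg ha hN0, mul_nonneg hb hN1, sq_nonneg c, sq_nonneg ((starRingEnd ℂ u * v).re)]

lemma M2_spectrum (a b c s t : ℝ) (htr : a + b = s + t) (hdet : a * b - c^2 = s * t) :
    spectrum ℝ (M2 a b c) = {s, t} := by
  ext x
  rw [spectrum.mem_iff, Matrix.isUnit_iff_isUnit_det]
  have hdet2 : (algebraMap ℝ (Matrix (Fin 2) (Fin 2) ℂ) x - M2 a b c).det
      = ((x:ℂ) - s) * ((x:ℂ) - t) := by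
    rw [Matrix.det_fin_two]
    simp only [Matrix.sub_apply, Matrix.algebraMap_matrix_apply, M2]
    have h1 : ((a:ℂ) + b) = (s:ℂ) + t := by exact_mod_cast congrArg Complex.ofReal htr
    have h2 : ((a:ℂ) * b - (c:ℂ)^2) = (s:ℂ) * t := by exact_mod_cast congrArg Complex.ofReal hdet
    norm_num [Matrix.cons_val_zero, Matrix.cons_val_one]
    linear_combination (-(x:ℂ)) * h1 + h2
  rw [hdet2]
  simp [isUnit_iff_ne_zero, mul_eq_zero, sub_eq_zero, Complex.ofReal_inj]
  tauto

lemma M2_sub (a b c a' b' c' : ℝ) :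
    M2 a b c - M2 a' b' c' = M2 (a - a') (b - b') (c - c') := by
  ext i j
  fin_cases i <;> fin_cases j <;> simp [M2]

lemma cfc_linear (A : Matrix (Fin 2) (Fin 2) ℂ) (hA : A.IsHermitian) (s t : ℝ) (hst : s ≠ t)
    (hspec : spectrum ℝ A = {s, t}) (f : ℝ → ℝ) :
    cfc f A = ((f s - f t)/(s - t)) • A
      + algebraMap ℝ (Matrix (Fin 2) (Fin 2) ℂ) (f s - ((f s - f t)/(s - t)) * s) := by
  have hsa : IsSelfAdjoint A := hA
  set k : ℝ := (f s - f t)/(s - t) with hk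
  set b : ℝ := f s - k * s with hb
  have hcongr : cfc f A = cfc (fun x : ℝ => k * x + b) A := by
    apply cfc_congr
    intro x hx
    rw [hspec] at hx
    have hst' : s - t ≠ 0 := sub_ne_zero.mpr hst
    rcases hx with rfl | hx
    · simp only [hk, hb]; field_simp; ring
    · rw [Set.mem_singleton_iff] at hx
      subst hx
      simp only [hk, hb]; field_simp; ring
  rw [hcongr, cfc_add (a := A) (fun x : ℝ => k * x) (fun _ : ℝ => b) (by fun_prop) (by fun_prop), cfc_const_mul_id k A hsa, cfc_const b A hsa]

lemma entry00 (k c a b co : ℝ) :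
    ((k • M2 a b co + algebraMap ℝ (Matrix (Fin 2) (Fin 2) ℂ) c) 0 0).re = k * a + c := by
  have h1 : (k • M2 a b co + algebraMap ℝ (Matrix (Fin 2) (Fin 2) ℂ) c) 0 0
      = k • (M2 a b co 0 0) + ((c:ℂ)) := by
    simp [Matrix.add_apply, Matrix.smul_apply, Matrix.algebraMap_matrix_apply]
  rw [h1]
  simp [M2, Complex.real_smul]

lemma psd_entry_re_nonneg {n : ℕ} {A : Matrix (Fin n) (Fin n) ℂ} (h : A.PosSemidef) (i : Fin n) :
    0 ≤ (A i i).re := by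
  have h2 := h.dotProduct_mulVec_nonneg (Pi.single i 1)
  have : dotProduct (star (Pi.single i 1)) (A *ᵥ (Pi.single i 1)) = A i i := by
    simp [dotProduct, Matrix.mulVec, Pi.single_apply, Finset.sum_ite_eq]
  rw [this] at h2
  exact (Complex.le_def.mp h2).1

lemma algebraMap_eq_diagonal {n : ℕ} (r : ℝ) :
    algebraMap ℝ (Matrix (Fin n) (Fin n) ℂ) r = diagonal (fun _ => (r:ℂ)) := by
  ext i j
  simp [Matrix.algebraMap_matrix_apply, Matrix.diagonal]

lemma psd_algebraMap {n : ℕ} {r : ℝ} (hr : 0 ≤ r) :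
    (algebraMap ℝ (Matrix (Fin n) (Fin n) ℂ) r).PosSemidef := by
  rw [algebraMap_eq_diagonal]
  exact Matrix.PosSemidef.diagonal (fun _ => Complex.zero_le_real.mpr hr)

lemma fop_mono {f : ℝ → ℝ} (hf : IsFop f) {x y : ℝ} (hx : 0 ≤ x) (hxy : x ≤ y) : f x ≤ f y := by
  have hXY : (algebraMap ℝ (Matrix (Fin 1) (Fin 1) ℂ) y
      - algebraMap ℝ (Matrix (Fin 1) (Fin 1) ℂ) x).PosSemidef := by
    rw [← map_sub]
    exact psd_algebraMap (by linarith)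
  have h := hf.opMono 1 _ _ (psd_algebraMap hx) (psd_algebraMap (by linarith : (0:ℝ) ≤ y)) hXY
  rw [cfc_algebraMap, cfc_algebraMap, ← map_sub] at h
  have h2 := psd_entry_re_nonneg h 0
  rw [algebraMap_eq_diagonal] at h2
  simpa using h2
lemma key {f : ℝ → ℝ} (hf : IsFop f) {f0 : ℝ} (hf0 : IsFzero f f0)
    {p s u : ℝ} (hp : 0 < p) (hps : p < s) (hpu : p < u) :
    (p * f s + (s - p) * f0) / s ≤ f u := by
  set q : ℝ := s - p with hq
  have hq0 : 0 < q := by simp only [hq]; linarith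
  have hs : 0 < s := by linarith
  have hu : 0 < u := by linarith
  have hup : 0 < u - p := by linarith
  set bh : ℝ := max (q + p*q/(u-p) + 1) (u+1) with hbh
  have hbhu : u < bh := lt_of_lt_of_le (by linarith) (le_max_right _ _)
  have hbhq : q + p*q/(u-p) + 1 ≤ bh := le_max_left _ _
  have hbh0 : 0 < bh := by
    have : 0 < p*q/(u-p) := by positivity
    linarith
  set r : ℝ := Real.sqrt (p*q) with hr
  have hr2 : r^2 = p*q := Real.sq_sqrt (by positivity)
  -- the eventual inequality in ε
  have hev : ∀ᶠ ε in nhdsWithin 0 (Set.Ioi 0), (p * f s + q * f ε) / s ≤ f u := by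
    have h1 : ∀ᶠ ε in nhds (0:ℝ), ε < s := eventually_lt_nhds hs
    have h2 : ∀ᶠ ε in nhds (0:ℝ), 0 < u - p - ε*q/s := by
      have hc : ContinuousAt (fun ε : ℝ => u - p - ε*q/s) 0 := by fun_prop
      have h0 : (0:ℝ) < u - p - 0*q/s := by simpa using hup
      exact hc.eventually (eventually_gt_nhds h0)
    have h3 : ∀ᶠ ε in nhds (0:ℝ), 0 < bh - q - ε*p/s := by
      have hc : ContinuousAt (fun ε : ℝ => bh - q - ε*p/s) 0 := by fun_prop
      have h0 : (0:ℝ) < bh - q - 0*p/s := by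
        have : 0 < p*q/(u-p) := by positivity
        simp only [zero_mul, zero_div, sub_zero]
        linarith
      exact hc.eventually (eventually_gt_nhds h0)
    have h4 : ∀ᶠ ε in nhds (0:ℝ),
        p*q*(1-ε/s)^2 < (u - p - ε*q/s) * (bh - q - ε*p/s) := by
      have hc : ContinuousAt
          (fun ε : ℝ => (u - p - ε*q/s) * (bh - q - ε*p/s) - p*q*(1-ε/s)^2) 0 := by fun_prop
      have h0 : (0:ℝ) < (u - p - 0*q/s) * (bh - q - 0*p/s) - p*q*(1-0/s)^2 := by
        simp only [zero_mul, zero_div, sub_zero, one_pow, mul_one]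
        have hkey : p*q + (u - p) ≤ (u-p) * (bh - q) := by
          have h5 : p*q/(u-p) + 1 ≤ bh - q := by linarith
          have h6 : (u-p) * (p*q/(u-p) + 1) ≤ (u-p) * (bh - q) :=
            mul_le_mul_of_nonneg_left h5 hup.le
          have h7 : (u-p) * (p*q/(u-p) + 1) = p*q + (u-p) := by field_simp
          exact h7 ▸ h6
        linarith
      have := hc.eventually (eventually_gt_nhds h0)
      filter_upwards [this] with ε hε
      linarith
    filter_upwards [Filter.Eventually.filter_mono nhdsWithin_le_nhds h1,
      Filter.Eventually.filter_mono nhdsWithin_le_nhds h2,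
      Filter.Eventually.filter_mono nhdsWithin_le_nhds h3,
      Filter.Eventually.filter_mono nhdsWithin_le_nhds h4,
      self_mem_nhdsWithin] with ε hε1 hε2 hε3 hε4 hε0
    rw [Set.mem_Ioi] at hε0
    -- set up matrices
    set Me : Matrix (Fin 2) (Fin 2) ℂ := M2 (p + ε*q/s) (q + ε*p/s) (r*(1 - ε/s)) with hMe
    set D : Matrix (Fin 2) (Fin 2) ℂ := M2 u bh 0 with hD
    have hdetMe : (p + ε*q/s) * (q + ε*p/s) - (r*(1 - ε/s))^2 = s * ε := by
      rw [mul_pow, hr2, hq]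
      field_simp
      ring
    have hMepsd : Me.PosSemidef := by
      apply M2_psd _ _ _ (by positivity) (by positivity)
      nlinarith [mul_pos hs hε0]
    have hDpsd : D.PosSemidef := M2_psd _ _ _ hu.le hbh0.le (by nlinarith)
    have hsubpsd : (D - Me).PosSemidef := by
      rw [hD, hMe, M2_sub]
      apply M2_psd _ _ _ (by linarith) (by linarith)
      have : (0 - r*(1-ε/s))^2 = p*q*(1-ε/s)^2 := by rw [← hr2]; ring
      rw [this]
      linarith
    have hspecMe : spectrum ℝ Me = {s, ε} := by
      apply M2_spectrum
      · rw [hq]; field_simp; ring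
      · rw [hdetMe]
    have hspecD : spectrum ℝ D = {u, bh} := M2_spectrum _ _ _ _ _ rfl (by ring)
    have hPSD := hf.opMono 2 Me D hMepsd hDpsd hsubpsd
    rw [cfc_linear Me (M2_herm _ _ _) s ε (by linarith) hspecMe f,
        cfc_linear D (M2_herm _ _ _) u bh (by linarith) hspecD f] at hPSD
    have hentry := psd_entry_re_nonneg hPSD 0
    set k1 : ℝ := (f u - f bh)/(u - bh) with hk1
    set k2 : ℝ := (f s - f ε)/(s - ε) with hk2
    have hval : ((k1 • D + algebraMap ℝ (Matrix (Fin 2) (Fin 2) ℂ) (f u - k1 * u)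
        - (k2 • Me + algebraMap ℝ (Matrix (Fin 2) (Fin 2) ℂ) (f s - k2 * s))) 0 0).re
        = (k1 * u + (f u - k1 * u)) - (k2 * (p + ε*q/s) + (f s - k2 * s)) := by
      rw [Matrix.sub_apply, Complex.sub_re, hD, hMe, entry00, entry00]
    rw [hval] at hentry
    -- simplify: k2 * (s - p - ε*q/s) = (f s - f ε) * q / s
    have hse : s - ε ≠ 0 := by linarith
    have hkey2 : k2 * (s - (p + ε*q/s)) = (f s - f ε) * q / s := by
      rw [hk2, hq]
      field_simp
      ring
    have : f s - k2 * (s - (p + ε*q/s)) = (p * f s + q * f ε)/s := by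
      rw [hkey2, hq]
      field_simp
      ring
    linarith [hentry, this]
  -- take the limit ε → 0⁺
  have hT : Filter.Tendsto (fun ε => (p * f s + q * f ε) / s) (nhdsWithin 0 (Set.Ioi 0))
      (nhds ((p * f s + q * f0) / s)) := by
    exact (Filter.Tendsto.const_add _ (hf0.const_mul q)).div_const s
  have := le_of_tendsto hT hev
  rw [hq] at this
  exact this
lemma f0_nonneg {f : ℝ → ℝ} (hf : IsFop f) {f0 : ℝ} (hf0 : IsFzero f f0) : 0 ≤ f0 :=
  ge_of_tendsto hf0 (Filter.eventually_of_mem self_mem_nhdsWithin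
    (fun ε hε => (hf.pos ε hε).le))

lemma f0_le {f : ℝ → ℝ} (hf : IsFop f) {f0 : ℝ} (hf0 : IsFzero f f0) {t : ℝ} (ht : 0 < t) :
    f0 ≤ f t := by
  apply le_of_tendsto hf0
  have h1 : ∀ᶠ ε in nhdsWithin 0 (Set.Ioi (0:ℝ)), ε < t :=
    Filter.Eventually.filter_mono nhdsWithin_le_nhds (eventually_lt_nhds ht)
  filter_upwards [h1, self_mem_nhdsWithin] with ε hε1 hε0
  exact fop_mono hf (Set.mem_Ioi.mp hε0).le hε1.le

lemma f_lb {f : ℝ → ℝ} (hf : IsFop f) {f0 : ℝ} (hf0 : IsFzero f f0) {s : ℝ} (hs : 0 < s) :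
    f0 * s ≤ f s := by
  rw [hf.funcEq s hs]
  have := f0_le hf hf0 (t := s⁻¹) (by positivity)
  calc f0 * s = s * f0 := by ring
    _ ≤ s * f s⁻¹ := by nlinarith

lemma f_ge {f : ℝ → ℝ} (hf : IsFop f) {f0 : ℝ} (hf0 : IsFzero f f0) {z : ℝ} (hz : 0 < z) :
    f0 * (1 + z) ≤ f z := by
  have hf00 := f0_nonneg hf hf0
  set L : ℝ → ℝ := fun T => f0*(1+z) - f0*(1+z)*T⁻¹ + f0*(T⁻¹*T⁻¹) with hL
  have hLT : Filter.Tendsto L Filter.atTop (nhds (f0*(1+z))) := by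
    have h0 : Filter.Tendsto (fun T : ℝ => T⁻¹) Filter.atTop (nhds 0) := tendsto_inv_atTop_zero
    have h1 := ((tendsto_const_nhds (x := f0*(1+z)) (f := Filter.atTop)).sub
      (h0.const_mul (f0*(1+z)))).add ((h0.mul h0).const_mul f0)
    simpa using h1
  apply le_of_tendsto hLT
  have hev : ∀ᶠ T in Filter.atTop, max (z⁻¹ + 1) (z + 1) ≤ T := Filter.eventually_ge_atTop _
  filter_upwards [hev] with T hT
  have hT1 : z⁻¹ + 1 ≤ T := le_trans (le_max_left _ _) hT
  have hT2 : z + 1 ≤ T := le_trans (le_max_right _ _) hT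
  have hTpos : 0 < T := by nlinarith [inv_pos.mpr hz]
  have hzT : 1/T < z := by
    rw [div_lt_iff₀ hTpos]
    have hinv : z⁻¹ < T := by nlinarith [inv_pos.mpr hz]
    calc (1:ℝ) = z * z⁻¹ := by field_simp
      _ < z * T := by nlinarith
  set p : ℝ := z - 1/T with hp
  have hp0 : 0 < p := by simp only [hp]; linarith
  have hpT : p < T := by
    simp only [hp]
    have : 0 < 1/T := by positivity
    linarith
  have hpz : p < z := by
    have h01T : 0 < 1/T := by positivity
    simp only [hp]
    linarith
  have hk := key hf hf0 hp0 hpT hpz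
  have hfT : f0 * T ≤ f T := f_lb hf hf0 hTpos
  have hnum : p * (f0 * T) + (T - p) * f0 ≤ p * f T + (T - p) * f0 := by nlinarith
  have hmono : (p * (f0 * T) + (T - p) * f0) / T ≤ (p * f T + (T - p) * f0) / T :=
    (div_le_div_iff_of_pos_right hTpos).mpr hnum
  have hLeq : L T = (p * (f0 * T) + (T - p) * f0) / T := by
    simp only [hL, hp]
    field_simp
    ring
  rw [hLeq]
  exact hmono.trans hk

/-- For every `f ∈ F_op` and `x, y > 0`: `g_cl(x,y) ≥ g_f^{s}(x,y)`; equivalently `m_f(x,y) ≥ f(0)·(x+y)`. -/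
theorem gcl_ge_gs
    (f : ℝ → ℝ) (hf : IsFop f) (f0 : ℝ) (hf0 : IsFzero f f0) :
    ∀ x y : ℝ, 0 < x → 0 < y → gs f f0 x y ≤ gcl x y ∧ f0 * (x + y) ≤ mfun f x y := by
  intro x y hx hy
  have hxy : 0 < x / y := by positivity
  have hge := f_ge hf hf0 hxy
  have hm : f0 * (x + y) ≤ mfun f x y := by
    unfold mfun
    have hyx : y * (1 + x/y) = x + y := by field_simp; ring
    calc f0 * (x + y) = y * (f0 * (1 + x/y)) := by rw [← hyx]; ring
      _ ≤ y * f (x/y) := by nlinarith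
  refine ⟨?_, hm⟩
  have hmpos : 0 < mfun f x y := by
    unfold mfun; exact mul_pos hy (hf.pos _ hxy)
  unfold gs gcl
  rw [div_le_div_iff₀ (by positivity) (by norm_num)]
  nlinarith [hm, mul_pos hmpos (show (0:ℝ) < x + y by linarith)]
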